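/- Let (V,⟨·,·⟩) be a finite-dimensional vector space over a field F of characteristic ≠ 2 with a nondegenerate symmetric bilinear form, and suppose V = ⊕_{i∈I} V_i is a direct sum of linear subspaces such that for every i∈I there is a unique j∈I with ⟨V_i,V_j⟩ ≠ 0. Then there exists a basis B = {u_1,v_1,…,u_r,v_r,z_1,…,z_q} of V with B ⊆ ∪_i V_i such that ⟨z_i,z_i⟩ ≠ 0, ⟨u_i,v_i⟩ = 1, and any other inner product of two distinct elements of B is zero. -/

import Mathlib

open Module

/-- Lemma 2.2: a finite-dimensional vector space with a nondegenerate symmetric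
bilinear form (char F ≠ 2), which is a direct sum of subspaces each pairing
nontrivially with exactly one other, has a basis
`{u_1,v_1,…,u_r,v_r,z_1,…,z_q}` of elements of the given subspaces with
`⟨z_l,z_l⟩ ≠ 0`, `⟨u_i,v_i⟩ = 1` and all other inner products zero. -/
theorem symmetric_homogeneous_basis
    (F : Type*) [Field F] (hchar : (2 : F) ≠ 0)
    (V : Type*) [AddCommGroup V] [Module F V] [FiniteDimensional F V]
    (B : LinearMap.BilinForm F V)
    (hsymm : ∀ v w : V, B v w = B w v)
    (hnd : ∀ v : V, (∀ w : V, B v w = 0) → v = 0)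
    (I : Type*) [DecidableEq I] (Vi : I → Submodule F V)
    (hint : DirectSum.IsInternal Vi)
    (huniq : ∀ i : I, ∃! j : I, ∃ a ∈ Vi i, ∃ b ∈ Vi j, B a b ≠ 0) :
    ∃ (r q : ℕ) (b : Basis ((Fin r × Bool) ⊕ Fin q) F V),
      (∀ p : (Fin r × Bool) ⊕ Fin q, ∃ i : I, b p ∈ Vi i) ∧
      (∀ l : Fin q, B (b (Sum.inr l)) (b (Sum.inr l)) ≠ 0) ∧
      (∀ i : Fin r, B (b (Sum.inl (i, false))) (b (Sum.inl (i, true))) = 1) ∧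
      (∀ p p' : (Fin r × Bool) ⊕ Fin q,
        ¬(p = p' ∧ ∃ l : Fin q, p = Sum.inr l) →
        ¬(∃ i : Fin r, (p = Sum.inl (i, false) ∧ p' = Sum.inl (i, true)) ∨
            (p = Sum.inl (i, true) ∧ p' = Sum.inl (i, false))) →
        B (b p) (b p') = 0) := by
  classical
  choose σ hσ hσu using huniq
  have horth : ∀ i j : I, j ≠ σ i → ∀ a ∈ Vi i, ∀ b ∈ Vi j, B a b = 0 := by
    intro i j hj a ha b hb
    by_contra h
    exact hj (hσu i j ⟨a, ha, b, hb, h⟩)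
  have hσσ : ∀ i, σ (σ i) = i := by
    intro i
    obtain ⟨a, ha, b, hb, hab⟩ := hσ i
    exact (hσu (σ i) i ⟨b, hb, a, ha, fun h => hab (by rwa [hsymm])⟩).symm
  have hσinj : Function.Injective σ := Function.LeftInverse.injective hσσ
  haveI : Finite I := by
    have hfin : {i : I | Vi i ≠ ⊥}.Finite :=
      Submodule.finite_ne_bot_of_iSupIndep hint.submodule_iSupIndep
    have hall : {i : I | Vi i ≠ ⊥} = Set.univ := by
      ext i
      simp only [Set.mem_setOf_eq, Set.mem_univ, iff_true]
      obtain ⟨a, ha, b, hb, hab⟩ := hσ i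
      intro hbot
      rw [hbot, Submodule.mem_bot] at ha
      exact hab (by simp [ha])
    rw [hall] at hfin
    exact Set.finite_univ_iff.mp hfin
  haveI : Fintype I := Fintype.ofFinite I
  letI : LinearOrder I := LinearOrder.lift' (Fintype.equivFin I) (Fintype.equivFin I).injective
  -- key nondegeneracy of the pairing between `Vi i` and `Vi (σ i)`
  have hkey : ∀ i : I, ∀ b ∈ Vi (σ i), (∀ a ∈ Vi i, B a b = 0) → b = 0 := by
    intro i b hb h0
    apply hnd
    intro w
    rw [hsymm]
    have hw : w ∈ ⨆ k, Vi k := by rw [hint.submodule_iSup_eq_top]; trivial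
    refine Submodule.iSup_induction (motive := fun w => B w b = 0) _ hw ?_ (by simp) ?_
    · intro k a ha
      rcases eq_or_ne k i with rfl | hk
      · exact h0 a ha
      · exact horth k (σ i) (fun h => hk (hσinj h.symm)) a ha b hb
    · intro x y hx hy
      rw [map_add, LinearMap.add_apply, hx, hy, add_zero]
  -- rank equality
  have hkey' : ∀ i : I, ∀ a ∈ Vi i, (∀ b ∈ Vi (σ i), B a b = 0) → a = 0 := by
    intro i a ha h0
    refine hkey (σ i) a (by rw [hσσ]; exact ha) ?_
    intro b hb
    rw [hsymm]
    exact h0 b hb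
  have hrank : ∀ j : I, finrank F (Vi j) = finrank F (Vi (σ j)) := by
    intro j
    let Bp := LinearMap.domRestrict₁₂ B (Vi j) (Vi (σ j))
    have hφinj : Function.Injective Bp.flip := by
      intro x y hxy
      rw [← sub_eq_zero]
      have hxy0 : Bp.flip (x - y) = 0 := by rw [map_sub, hxy, sub_self]
      have : (x : V) - (y : V) = 0 := by
        have := hkey j ((x - y : Vi (σ j)) : V) (x - y).2 ?_
        · exact_mod_cast this
        · intro a ha
          have := congrArg (fun g => g ⟨a, ha⟩) hxy0
          simpa [Bp, LinearMap.domRestrict₁₂_apply] using this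
      exact_mod_cast this
    have hψinj : Function.Injective Bp := by
      intro x y hxy
      rw [← sub_eq_zero]
      have hxy0 : Bp (x - y) = 0 := by rw [map_sub, hxy, sub_self]
      have : (x : V) - (y : V) = 0 := by
        have := hkey' j ((x - y : Vi j) : V) (x - y).2 ?_
        · exact_mod_cast this
        · intro b hb
          have := congrArg (fun g => g ⟨b, hb⟩) hxy0
          simpa [Bp, LinearMap.domRestrict₁₂_apply] using this
      exact_mod_cast this
    have h1 : finrank F (Vi (σ j)) ≤ finrank F (Vi j) := by
      have := LinearMap.finrank_le_finrank_of_injective hφinj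
      rwa [Subspace.dual_finrank_eq] at this
    have h2 : finrank F (Vi j) ≤ finrank F (Vi (σ j)) := by
      have := LinearMap.finrank_le_finrank_of_injective hψinj
      rwa [Subspace.dual_finrank_eq] at this
    exact le_antisymm h2 h1
  -- fixed points: nondegenerate restriction and orthogonal basis
  have hfixbasis : ∀ i : I, σ i = i → ∃ c : Basis (Fin (finrank F (Vi i))) F (Vi i),
      (∀ k l, k ≠ l → B (c k : V) (c l : V) = 0) ∧ ∀ k, B (c k : V) (c k : V) ≠ 0 := by
    intro i hi
    have hndres : (B.restrict (Vi i)).Nondegenerate := by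
      refine LinearMap.BilinForm.Nondegenerate.ofSeparatingLeft ?_
      intro x hx
      have hx0 : (x : V) = 0 := by
        refine hkey i (x : V) (by rw [hi]; exact x.2) ?_
        intro a ha
        have := hx ⟨a, ha⟩
        rw [hsymm]
        simpa [LinearMap.BilinForm.restrict, LinearMap.domRestrict₁₂_apply] using this
      exact_mod_cast hx0
    haveI : Invertible (2 : F) := invertibleOfNonzero hchar
    have hBsymm : B.IsSymm := ⟨fun x y => hsymm x y⟩
    obtain ⟨v, hv⟩ := LinearMap.BilinForm.exists_orthogonal_basis (B := B.restrict (Vi i)) ⟨fun x y => hsymm x y⟩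
    refine ⟨v, ?_, ?_⟩
    · intro k l hkl
      have := hv hkl
      simpa [LinearMap.BilinForm.restrict, LinearMap.domRestrict₁₂_apply] using this
    · intro k h0
      have hzero : (B.restrict (Vi i)) (v k) = 0 := by
        apply v.ext
        intro l
        rcases eq_or_ne k l with rfl | hkl
        · simpa [LinearMap.BilinForm.restrict, LinearMap.domRestrict₁₂_apply] using h0
        · have := hv hkl
          simpa using this
      have := hndres.1 (v k) (fun y => by rw [hzero]; rfl)
      exact v.ne_zero k this
  -- pairs: dual basis on the `σ j` side
  have hpair : ∀ j : I, ∃ c : Basis (Fin (finrank F (Vi (σ j)))) F (Vi (σ j)),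
      ∀ (k : Fin (finrank F (Vi j))) (l : Fin (finrank F (Vi (σ j)))),
        B (Module.finBasis F (Vi j) k : V) (c l : V) =
          if (k : ℕ) = (l : ℕ) then 1 else 0 := by
    intro j
    let Bp := LinearMap.domRestrict₁₂ B (Vi j) (Vi (σ j))
    have hφinj : Function.Injective Bp.flip := by
      intro x y hxy
      rw [← sub_eq_zero]
      have hxy0 : Bp.flip (x - y) = 0 := by rw [map_sub, hxy, sub_self]
      have hc : (x : V) - (y : V) = 0 := by
        have := hkey j ((x - y : Vi (σ j)) : V) (x - y).2 ?_
        · exact_mod_cast this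
        · intro a ha
          have := congrArg (fun g => g ⟨a, ha⟩) hxy0
          simpa [Bp, LinearMap.domRestrict₁₂_apply] using this
      exact_mod_cast hc
    have hdim : finrank F (Vi (σ j)) = finrank F (Module.Dual F (Vi j)) := by
      rw [Subspace.dual_finrank_eq]
      exact (hrank j).symm
    let e := LinearMap.linearEquivOfInjective Bp.flip hφinj hdim
    let u := Module.finBasis F (Vi j)
    let c : Basis (Fin (finrank F (Vi (σ j)))) F (Vi (σ j)) :=
      (u.dualBasis.map e.symm).reindex (finCongr (hrank j))
    refine ⟨c, ?_⟩
    intro k l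
    have hcl : c l = e.symm (u.dualBasis ((finCongr (hrank j)).symm l)) := by
      simp [c, Basis.reindex_apply, Basis.map_apply]
    have hφ : Bp.flip (c l) = u.dualBasis ((finCongr (hrank j)).symm l) := by
      rw [hcl]
      have h2 := e.apply_symm_apply (u.dualBasis ((finCongr (hrank j)).symm l))
      simp only [e, LinearMap.linearEquivOfInjective_apply] at h2
      exact h2
    have : B (u k : V) (c l : V) = u.dualBasis ((finCongr (hrank j)).symm l) (u k) := by
      have := congrArg (fun g => g (u k)) hφ
      simpa [Bp, LinearMap.domRestrict₁₂_apply] using this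
    rw [this, Basis.dualBasis_apply_self]
    congr 1
    simp [Fin.ext_iff, eq_comm]
  -- choose a basis for every `Vi i`
  have hex : ∀ i : I, ∃ c : Basis (Fin (finrank F (Vi i))) F (Vi i),
      (σ i = i → (∀ k l, k ≠ l → B (c k : V) (c l : V) = 0) ∧ ∀ k, B (c k : V) (c k : V) ≠ 0) ∧
      (i < σ i → c = Module.finBasis F (Vi i)) ∧
      (σ i < i → ∀ (k : Fin (finrank F (Vi (σ i)))) (l : Fin (finrank F (Vi i))),
        B (Module.finBasis F (Vi (σ i)) k : V) (c l : V) =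
          if (k : ℕ) = (l : ℕ) then 1 else 0) := by
    intro i
    rcases lt_trichotomy i (σ i) with h | h | h
    · exact ⟨Module.finBasis F (Vi i), fun hi => absurd hi h.ne', fun _ => rfl,
        fun h' => absurd h' (asymm h)⟩
    · obtain ⟨c, hc1, hc2⟩ := hfixbasis i h.symm
      exact ⟨c, fun _ => ⟨hc1, hc2⟩, fun h' => absurd h h'.ne,
        fun h' => absurd h.symm h'.ne⟩
    · obtain ⟨c, hc⟩ := hpair (σ i)
      have hii := hσσ i
      let c' : Basis (Fin (finrank F (Vi i))) F (Vi i) :=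
        (c.map (LinearEquiv.ofEq _ _ (congrArg Vi hii))).reindex
          (finCongr (congrArg (fun s => finrank F (Vi s)) hii))
      refine ⟨c', fun hi => absurd (by rwa [hi] at h : i < i) (lt_irrefl i), fun h' => absurd h' (asymm h), ?_⟩
      intro _ k l
      have hc'l : (c' l : V) =
          (c ((finCongr (congrArg (fun s => finrank F (Vi s)) hii)).symm l) : V) := by
        simp [c', Basis.reindex_apply, Basis.map_apply]
      rw [hc'l, hc k]
      congr 1
  choose c hcfix hcT hcdual using hex
  -- assemble the collected basis and reindex
  let bb := hint.collectedBasis c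
  let P := Σ j : {j : I // j < σ j}, Fin (finrank F (Vi j.1))
  let Q := Σ i : {i : I // σ i = i}, Fin (finrank F (Vi i.1))
  let f : (P × Bool) ⊕ Q → Σ i : I, Fin (finrank F (Vi i)) := fun x =>
    match x with
    | .inl (⟨⟨j, _⟩, k⟩, false) => ⟨j, k⟩
    | .inl (⟨⟨j, _⟩, k⟩, true) => ⟨σ j, Fin.cast (hrank j) k⟩
    | .inr ⟨⟨i, _⟩, k⟩ => ⟨i, k⟩
  have hclassuv : ∀ {a b : I}, a < σ a → b < σ b → a = σ b → False := by
    intro a b ha hb h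
    subst h
    rw [hσσ] at ha
    exact absurd ha (asymm hb)
  have hclassuf : ∀ {a b : I}, a < σ a → σ b = b → a = b → False := by
    intro a b ha hb h
    subst h
    rw [hb] at ha
    exact lt_irrefl _ ha
  have hclassvf : ∀ {a b : I}, a < σ a → σ b = b → σ a = b → False := by
    intro a b ha hb h
    have h2 : σ b = a := by rw [← h, hσσ]
    rw [hb] at h2
    exact absurd (h.trans h2) ha.ne'
  have hfinj : Function.Injective f := by
    rintro (⟨⟨⟨j, hj⟩, k⟩, _ | _⟩ | ⟨⟨i, hi⟩, k⟩) (⟨⟨⟨j', hj'⟩, k'⟩, _ | _⟩ | ⟨⟨i', hi'⟩, k'⟩) h <;>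
      simp only [f, Sigma.mk.inj_iff] at h
    · obtain ⟨h1, h2⟩ := h
      subst h1
      rw [heq_iff_eq] at h2
      subst h2
      rfl
    · exact absurd h.1 (fun hh => hclassuv hj hj' hh)
    · exact absurd h.1 (fun hh => hclassuf hj hi' hh)
    · exact absurd h.1 (fun hh => hclassuv hj' hj hh.symm)
    · obtain ⟨h1, h2⟩ := h
      have hjj : j = j' := hσinj h1
      subst hjj
      rw [heq_iff_eq] at h2
      have hkk : k = k' := by
        apply Fin.ext
        simpa [Fin.ext_iff] using h2
      subst hkk
      rfl
    · exact absurd h.1 (fun hh => hclassvf hj hi' hh)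
    · exact absurd h.1 (fun hh => hclassuf hj' hi hh.symm)
    · exact absurd h.1 (fun hh => hclassvf hj' hi hh.symm)
    · obtain ⟨h1, h2⟩ := h
      subst h1
      rw [heq_iff_eq] at h2
      subst h2
      rfl
  have hfsurj : Function.Surjective f := by
    rintro ⟨i, k⟩
    rcases lt_trichotomy i (σ i) with h | h | h
    · exact ⟨Sum.inl (⟨⟨i, h⟩, k⟩, false), rfl⟩
    · exact ⟨Sum.inr ⟨⟨i, h.symm⟩, k⟩, rfl⟩
    · have hj : σ i < σ (σ i) := by rw [hσσ]; exact h
      refine ⟨Sum.inl (⟨⟨σ i, hj⟩, Fin.cast (hrank i) k⟩, true), ?_⟩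
      show (⟨σ (σ i), _⟩ : Σ i : I, Fin (finrank F (Vi i))) = ⟨i, k⟩
      refine Sigma.ext (hσσ i) ?_
      rw [Fin.heq_ext_iff (congrArg (fun s => finrank F (Vi s)) (hσσ i))]
      simp
  let e0 : ((P × Bool) ⊕ Q) ≃ (Σ i : I, Fin (finrank F (Vi i))) :=
    Equiv.ofBijective f ⟨hfinj, hfsurj⟩
  let b0 : Basis ((P × Bool) ⊕ Q) F V := bb.reindex e0.symm
  have hb0 : ∀ x, b0 x = (c (f x).1 (f x).2 : V) := by
    intro x
    rw [Basis.reindex_apply, Equiv.symm_symm]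
    rw [hint.collectedBasis_coe]
    rfl
  let r := Fintype.card P
  let qq := Fintype.card Q
  let eP := Fintype.equivFin P
  let eQ := Fintype.equivFin Q
  let efin : ((P × Bool) ⊕ Q) ≃ ((Fin r × Bool) ⊕ Fin qq) :=
    Equiv.sumCongr (Equiv.prodCongr eP (Equiv.refl Bool)) eQ
  let b : Basis ((Fin r × Bool) ⊕ Fin qq) F V := b0.reindex efin
  have hb : ∀ p, b p = b0 (efin.symm p) := fun p => by rw [Basis.reindex_apply]
  have hbl : ∀ (x : Fin r) (bo : Bool), b (Sum.inl (x, bo)) = b0 (Sum.inl (eP.symm x, bo)) := by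
    intro x bo
    rw [hb]
    rfl
  have hbr : ∀ l : Fin qq, b (Sum.inr l) = b0 (Sum.inr (eQ.symm l)) := by
    intro l
    rw [hb]
    rfl
  have hb0u : ∀ (j : { j : I // j < σ j }) (k : Fin (finrank F (Vi j.1))),
      b0 (Sum.inl (⟨j, k⟩, false)) = (c j.1 k : V) := fun j k => hb0 _
  have hb0v : ∀ (j : { j : I // j < σ j }) (k : Fin (finrank F (Vi j.1))),
      b0 (Sum.inl (⟨j, k⟩, true)) = (c (σ j.1) (Fin.cast (hrank j.1) k) : V) := fun j k => hb0 _
  have hb0q : ∀ (i : { i : I // σ i = i }) (k : Fin (finrank F (Vi i.1))),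
      b0 (Sum.inr ⟨i, k⟩) = (c i.1 k : V) := fun i k => hb0 _
  have hzero : ∀ (i₁ i₂ : I) (k₁ : Fin (finrank F (Vi i₁))) (k₂ : Fin (finrank F (Vi i₂))),
      i₂ ≠ σ i₁ → B (c i₁ k₁ : V) (c i₂ k₂ : V) = 0 :=
    fun i₁ i₂ k₁ k₂ h => horth i₁ i₂ h _ (c i₁ k₁).2 _ (c i₂ k₂).2
  refine ⟨r, qq, b, ?_, ?_, ?_, ?_⟩
  · intro p
    refine ⟨(f (efin.symm p)).1, ?_⟩
    rw [hb, hb0]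
    exact (c _ _).2
  · intro l
    rcases hx : eQ.symm l with ⟨⟨i, hi⟩, k⟩
    rw [hbr, hx, hb0q]
    exact (hcfix i hi).2 k
  · intro x
    rcases hx : eP.symm x with ⟨⟨j, hj⟩, k⟩
    rw [hbl, hbl, hx, hb0u, hb0v]
    have hd := hcdual (σ j) (by rw [hσσ]; exact hj)
    rw [hσσ j] at hd
    rw [hcT j hj, hd]
    simp
  · intro p p' h1 h2
    rcases p with ⟨x, _ | _⟩ | l <;> rcases p' with ⟨x', _ | _⟩ | l'
    · rcases hx : eP.symm x with ⟨⟨j, hj⟩, k⟩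
      rcases hx' : eP.symm x' with ⟨⟨j', hj'⟩, k'⟩
      rw [hbl, hbl, hx, hx', hb0u, hb0u]
      exact hzero _ _ _ _ (fun hh => hclassuv hj' hj hh)
    · rcases hx : eP.symm x with ⟨⟨j, hj⟩, k⟩
      rcases hx' : eP.symm x' with ⟨⟨j', hj'⟩, k'⟩
      rw [hbl, hbl, hx, hx', hb0u, hb0v]
      by_cases hjj : j' = j
      · subst hjj
        have hxx : x ≠ x' := fun he => h2 ⟨x, Or.inl ⟨rfl, by rw [he]⟩⟩
        have hkk : k ≠ k' := by
          intro he
          apply hxx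
          apply eP.symm.injective
          rw [hx, hx', he]
        have hd := hcdual (σ j') (by rw [hσσ]; exact hj)
        rw [hσσ j'] at hd
        rw [hcT j' hj, hd]
        rw [if_neg]
        intro he
        exact hkk (Fin.ext (by simpa using he))
      · exact hzero _ _ _ _ (fun hh => hjj (hσinj hh))
    · rcases hx : eP.symm x with ⟨⟨j, hj⟩, k⟩
      rcases hx' : eQ.symm l' with ⟨⟨i', hi'⟩, k'⟩
      rw [hbl, hbr, hx, hx', hb0u, hb0q]
      exact hzero _ _ _ _ (fun hh => hclassvf hj hi' hh.symm)
    · rcases hx : eP.symm x with ⟨⟨j, hj⟩, k⟩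
      rcases hx' : eP.symm x' with ⟨⟨j', hj'⟩, k'⟩
      rw [hbl, hbl, hx, hx', hb0v, hb0u]
      rw [hsymm]
      by_cases hjj : j = j'
      · subst hjj
        have hxx : x' ≠ x := fun he => h2 ⟨x, Or.inr ⟨rfl, by rw [← he]⟩⟩
        have hkk : k' ≠ k := by
          intro he
          apply hxx
          apply eP.symm.injective
          rw [hx, hx', he]
        have hd := hcdual (σ j) (by rw [hσσ]; exact hj')
        rw [hσσ j] at hd
        rw [hcT j hj', hd]
        rw [if_neg]
        intro he
        exact hkk (Fin.ext (by simpa using he))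
      · exact hzero _ _ _ _ (fun hh => hjj (hσinj hh))
    · rcases hx : eP.symm x with ⟨⟨j, hj⟩, k⟩
      rcases hx' : eP.symm x' with ⟨⟨j', hj'⟩, k'⟩
      rw [hbl, hbl, hx, hx', hb0v, hb0v]
      refine hzero _ _ _ _ (fun hh => ?_)
      rw [hσσ] at hh
      exact hclassuv hj hj' hh.symm
    · rcases hx : eP.symm x with ⟨⟨j, hj⟩, k⟩
      rcases hx' : eQ.symm l' with ⟨⟨i', hi'⟩, k'⟩
      rw [hbl, hbr, hx, hx', hb0v, hb0q]
      refine hzero _ _ _ _ (fun hh => ?_)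
      rw [hσσ] at hh
      exact hclassuf hj hi' hh.symm
    · rcases hx : eQ.symm l with ⟨⟨i, hi⟩, k⟩
      rcases hx' : eP.symm x' with ⟨⟨j', hj'⟩, k'⟩
      rw [hbr, hbl, hx, hx', hb0q, hb0u]
      refine hzero _ _ _ _ (fun hh => ?_)
      rw [hi] at hh
      exact hclassuf hj' hi hh
    · rcases hx : eQ.symm l with ⟨⟨i, hi⟩, k⟩
      rcases hx' : eP.symm x' with ⟨⟨j', hj'⟩, k'⟩
      rw [hbr, hbl, hx, hx', hb0q, hb0v]
      refine hzero _ _ _ _ (fun hh => ?_)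
      rw [hi] at hh
      exact hclassvf hj' hi hh
    · rcases hx : eQ.symm l with ⟨⟨i, hi⟩, k⟩
      rcases hx' : eQ.symm l' with ⟨⟨i', hi'⟩, k'⟩
      rw [hbr, hbr, hx, hx', hb0q, hb0q]
      by_cases hii : i = i'
      · subst hii
        have hll : l ≠ l' := fun he => h1 ⟨by rw [he], l', by rw [he]⟩
        have hkk : k ≠ k' := by
          intro he
          apply hll
          apply eQ.symm.injective
          rw [hx, hx', he]
        exact (hcfix i hi).1 k k' hkk
      · refine hzero _ _ _ _ (fun hh => ?_)
        rw [hi] at hh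
        exact hii hh.symm
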